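/- If a trajectory θ of the Kuramoto dynamics satisfies θ(t) ∈ Im(V_P) for all t in an interval, then θ̈_i(t) − θ̈_j(t) = Σ_{z≠ℓ} cos(φ_z(t) − φ_ℓ(t))·(φ̇_z(t) − φ̇_ℓ(t))·Σ_{k∈P_z}(a_{ik} − a_{jk}) = 0 for all i,j ∈ P_ℓ, where φ_z(t) is the common phase of cluster P_z at time t. -/

import Mathlib

open Finset Real

/-- If a Kuramoto trajectory stays in `Im(V_P)` on an interval (phases
constant on clusters, with common cluster phases `φ` and cluster frequencies `φ'`), then
for `i, j` in a common cluster `ℓ`, the second-derivative difference `θ̈ i - θ̈ j` equals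
`∑_{z ≠ ℓ} cos (φ z - φ ℓ) (φ' z - φ' ℓ) ∑_{k ∈ P_z} (a i k - a j k)`, and this
quantity is zero. -/
theorem second_derivative_difference
    (n m : ℕ) (a : Fin n → Fin n → ℝ) (ω : Fin n → ℝ)
    (cl : Fin n → Fin m)
    (t1 t2 : ℝ)
    (θ : ℝ → Fin n → ℝ) (φ φ' : ℝ → Fin m → ℝ)
    (hdyn : ∀ (i : Fin n), ∀ t ∈ Set.Ioo t1 t2,
      HasDerivAt (fun s => θ s i) (ω i + ∑ j, a i j * Real.sin (θ t j - θ t i)) t)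
    (hsync : ∀ t ∈ Set.Ioo t1 t2, ∀ i : Fin n, θ t i = φ t (cl i))
    (hφ : ∀ (z : Fin m), ∀ t ∈ Set.Ioo t1 t2,
      HasDerivAt (fun s => φ s z) (φ' t z) t) :
    ∀ t ∈ Set.Ioo t1 t2, ∀ (ℓ : Fin m) (i j : Fin n), cl i = ℓ → cl j = ℓ →
      (HasDerivAt
        (fun s => (ω i + ∑ k, a i k * Real.sin (θ s k - θ s i)) -
                  (ω j + ∑ k, a j k * Real.sin (θ s k - θ s j)))
        (∑ z ∈ univ.filter (fun z => z ≠ ℓ),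
          Real.cos (φ t z - φ t ℓ) * (φ' t z - φ' t ℓ) *
            ∑ k ∈ univ.filter (fun k => cl k = z), (a i k - a j k)) t) ∧
      (∑ z ∈ univ.filter (fun z => z ≠ ℓ),
          Real.cos (φ t z - φ t ℓ) * (φ' t z - φ' t ℓ) *
            ∑ k ∈ univ.filter (fun k => cl k = z), (a i k - a j k)) = 0 := by
  intro t ht ℓ i j hi hj
  have hIoo : Set.Ioo t1 t2 ∈ nhds t := (isOpen_Ioo).mem_nhds ht
  -- abbreviations
  set S : ℝ := ∑ z ∈ univ.filter (fun z => z ≠ ℓ),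
      Real.cos (φ t z - φ t ℓ) * (φ' t z - φ' t ℓ) *
        ∑ k ∈ univ.filter (fun k => cl k = z), (a i k - a j k) with hS
  set f : ℝ → ℝ := fun s => (ω i + ∑ k, a i k * Real.sin (θ s k - θ s i)) -
      (ω j + ∑ k, a j k * Real.sin (θ s k - θ s j)) with hf
  -- the synchronized version g of f
  set g : ℝ → ℝ := fun s => (ω i + ∑ k, a i k * Real.sin (φ s (cl k) - φ s ℓ)) -
      (ω j + ∑ k, a j k * Real.sin (φ s (cl k) - φ s ℓ)) with hg
  have hfg : f =ᶠ[nhds t] g := by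
    filter_upwards [hIoo] with s hs
    simp only [hf, hg]
    have h1 : ∀ k, θ s k = φ s (cl k) := hsync s hs
    rw [show θ s i = φ s ℓ by rw [h1 i, hi], show θ s j = φ s ℓ by rw [h1 j, hj]]
    simp only [h1]
  -- derivative of g
  have hdi : ∀ (i : Fin n), HasDerivAt (fun s => ω i + ∑ k, a i k * Real.sin (φ s (cl k) - φ s ℓ))
      (∑ k, a i k * (Real.cos (φ t (cl k) - φ t ℓ) * (φ' t (cl k) - φ' t ℓ))) t := by
    intro i
    have : HasDerivAt (fun s => ∑ k, a i k * Real.sin (φ s (cl k) - φ s ℓ))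
        (∑ k, a i k * (Real.cos (φ t (cl k) - φ t ℓ) * (φ' t (cl k) - φ' t ℓ))) t := by
      apply HasDerivAt.fun_sum
      intro k _
      exact (((hφ (cl k) t ht).sub (hφ ℓ t ht)).sin).const_mul (a i k)
    exact this.const_add (ω i)
  have hgd : HasDerivAt g
      (∑ k, (a i k - a j k) * (Real.cos (φ t (cl k) - φ t ℓ) * (φ' t (cl k) - φ' t ℓ))) t := by
    have := (hdi i).fun_sub (hdi j)
    simpa [sub_mul, Finset.sum_sub_distrib] using this
  -- identify the derivative with S
  have hsum : (∑ k, (a i k - a j k) * (Real.cos (φ t (cl k) - φ t ℓ) * (φ' t (cl k) - φ' t ℓ))) = S := by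
    rw [hS]
    rw [← Finset.sum_fiberwise (univ : Finset (Fin n)) cl
      (fun k => (a i k - a j k) * (Real.cos (φ t (cl k) - φ t ℓ) * (φ' t (cl k) - φ' t ℓ)))]
    rw [← Finset.sum_filter_of_ne (s := (univ : Finset (Fin m))) (p := fun z => z ≠ ℓ)]
    · apply Finset.sum_congr rfl
      intro z _
      rw [Finset.mul_sum]
      apply Finset.sum_congr rfl
      intro k hk
      have hkz : cl k = z := by simpa using hk
      rw [hkz]; ring
    · intro z _ hz
      intro hzl
      apply hz
      subst hzl
      apply Finset.sum_eq_zero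
      intro k hk
      have hkz : cl k = z := by simpa using hk
      rw [hkz]
      simp
  have hfS : HasDerivAt f S t := by
    rw [← hsum]
    exact hgd.congr_of_eventuallyEq hfg
  -- f vanishes on the interval
  have hf0 : ∀ s ∈ Set.Ioo t1 t2, f s = 0 := by
    intro s hs
    have key : ∀ (i : Fin n), cl i = ℓ →
        ω i + ∑ k, a i k * Real.sin (θ s k - θ s i) = φ' s ℓ := by
      intro i hi
      have h1 : HasDerivAt (fun u => θ u i) (ω i + ∑ k, a i k * Real.sin (θ s k - θ s i)) s :=
        hdyn i s hs
      have h2 : HasDerivAt (fun u => θ u i) (φ' s ℓ) s := by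
        have heq : (fun u => φ u ℓ) =ᶠ[nhds s] (fun u => θ u i) := by
          filter_upwards [(isOpen_Ioo).mem_nhds hs] with u hu
          rw [hsync u hu i, hi]
        exact (hφ ℓ s hs).congr_of_eventuallyEq heq.symm
      exact h1.unique h2
    simp only [hf]
    rw [key i hi, key j hj, sub_self]
  have hfz : HasDerivAt f 0 t := by
    have heq : (fun _ : ℝ => (0 : ℝ)) =ᶠ[nhds t] f := by
      filter_upwards [hIoo] with s hs
      exact (hf0 s hs).symm
    exact (hasDerivAt_const t (0 : ℝ)).congr_of_eventuallyEq heq.symm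
  have hS0 : S = 0 := hfS.unique hfz
  exact ⟨hfS, hS0⟩
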